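/- Let r ≥ 2, k ≥ 1, and A ⊆ [n] with |A| ≤ b(r)·(k-1), where the conclusion of Theorem (parts): χ(KG^r(m,k;Q)) = ⌈(m-r(k-1))/(r-1)⌉ holds for partitions Q with parts of size ≤ b(r). Then there exists a partition P_1,...,P_ℓ of [n] with |P_i| = b(r) for i ≤ k-1, |P_i| ≤ b(r) for i ≥ k, and A ⊆ P_1 ∪ ⋯ ∪ P_{k-1}; moreover for such a partition, every k-subset transversal to the partition is not contained in A, so KG^r(n,k;P) is a subhypergraph of KG^r_A(n,k), yielding χ(KG^r_A(n,k)) ≥ ⌈(n - r(k-1))/(r-1)⌉. -/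

import Mathlib

open Finset

/-- Ceiling division on naturals: `⌈a / b⌉`. -/
def cld (a b : ℕ) : ℕ := (a + b - 1) / b

/-- `P` is a partition of `Fin N` indexed by `Fin n`. -/
def IsPartition {N n : ℕ} (P : Fin n → Finset (Fin N)) : Prop :=
  (∀ i j, i ≠ j → Disjoint (P i) (P j)) ∧ ∀ x, ∃ i, x ∈ P i

/-- `σ` is transversal to the partition `P`: it meets each part in at most one element. -/
def Transversal {N n : ℕ} (P : Fin n → Finset (Fin N)) (σ : Finset (Fin N)) : Prop :=
  ∀ i, (σ ∩ P i).card ≤ 1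

/-- A set `σ ⊆ [n]` is `t`-wide: it is not contained in any interval of length `t`. -/
def Wide (n t : ℕ) (σ : Finset (Fin n)) : Prop :=
  ∀ a : ℕ, ¬ ∀ x ∈ σ, a ≤ x.val ∧ x.val < a + t

/-- Cyclic distance between two elements of `[n]`. -/
def cycDist (n : ℕ) (x y : Fin n) : ℕ :=
  min (max x.val y.val - min x.val y.val) (n - (max x.val y.val - min x.val y.val))

/-- `σ` is `s`-stable: any two of its elements are at cyclic distance at least `s`. -/
def Stable (n s : ℕ) (σ : Finset (Fin n)) : Prop :=
  ∀ x ∈ σ, ∀ y ∈ σ, x ≠ y → s ≤ cycDist n x y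

/-- `b(r) = 2^{α₀}(p₁-1)^{α₁}⋯(p_t-1)^{α_t}` for `r = 2^{α₀}p₁^{α₁}⋯p_t^{α_t}`. -/
def bfun (r : ℕ) : ℕ := r.factorization.prod fun p a => (if p = 2 then 2 else p - 1) ^ a

/-- Proper coloring of `KG^r(n,k)`: no `r` pairwise disjoint `k`-subsets monochromatic. -/
def ProperKG (r n k : ℕ) {m : ℕ} (c : Finset (Fin n) → Fin m) : Prop :=
  ∀ A : Fin r → Finset (Fin n), (∀ j, (A j).card = k) →
    (∀ j j', j ≠ j' → Disjoint (A j) (A j')) →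
    ¬ ∀ j j', c (A j) = c (A j')

noncomputable def chiKG (r n k : ℕ) : ℕ :=
  sInf {m | ∃ c : Finset (Fin n) → Fin m, ProperKG r n k c}

/-- Proper coloring of `KG^r(N,k;P)` (vertices: transversal `k`-subsets). -/
def ProperP (r N k : ℕ) {ℓ : ℕ} (P : Fin ℓ → Finset (Fin N)) {m : ℕ}
    (c : Finset (Fin N) → Fin m) : Prop :=
  ∀ A : Fin r → Finset (Fin N), (∀ j, (A j).card = k) →
    (∀ j, Transversal P (A j)) →
    (∀ j j', j ≠ j' → Disjoint (A j) (A j')) →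
    ¬ ∀ j j', c (A j) = c (A j')

noncomputable def chiP (r N k : ℕ) {ℓ : ℕ} (P : Fin ℓ → Finset (Fin N)) : ℕ :=
  sInf {m | ∃ c : Finset (Fin N) → Fin m, ProperP r N k P c}

/-- Proper coloring of `KG^r_s(n,k)`: a hyperedge is an `r`-tuple of `k`-subsets such that
each `i ∈ [n]` lies in at most `s i` of them. -/
def ProperS (r n k : ℕ) (s : Fin n → ℕ) {m : ℕ} (c : Finset (Fin n) → Fin m) : Prop :=
  ∀ A : Fin r → Finset (Fin n), (∀ j, (A j).card = k) →
    (∀ i : Fin n, ((univ : Finset (Fin r)).filter fun j => i ∈ A j).card ≤ s i) →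
    ¬ ∀ j j', c (A j) = c (A j')

noncomputable def chiS (r n k : ℕ) (s : Fin n → ℕ) : ℕ :=
  sInf {m | ∃ c : Finset (Fin n) → Fin m, ProperS r n k s c}

/-- Proper coloring of `KG^r_A(n,k)` (vertices: `k`-subsets not contained in `A`). -/
def ProperA (r n k : ℕ) (A : Finset (Fin n)) {m : ℕ} (c : Finset (Fin n) → Fin m) : Prop :=
  ∀ B : Fin r → Finset (Fin n), (∀ j, (B j).card = k) → (∀ j, ¬ B j ⊆ A) →
    (∀ j j', j ≠ j' → Disjoint (B j) (B j')) →
    ¬ ∀ j j', c (B j) = c (B j')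

noncomputable def chiA (r n k : ℕ) (A : Finset (Fin n)) : ℕ :=
  sInf {m | ∃ c : Finset (Fin n) → Fin m, ProperA r n k A c}

/-- Proper coloring of the `r`-stable subhypergraph `KG^r(n,k)_{r-stab}`. -/
def ProperStab (r n k : ℕ) {m : ℕ} (c : Finset (Fin n) → Fin m) : Prop :=
  ∀ A : Fin r → Finset (Fin n), (∀ j, (A j).card = k) → (∀ j, Stable n r (A j)) →
    (∀ j j', j ≠ j' → Disjoint (A j) (A j')) →
    ¬ ∀ j j', c (A j) = c (A j')

noncomputable def chiStab (r n k : ℕ) : ℕ :=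
  sInf {m | ∃ c : Finset (Fin n) → Fin m, ProperStab r n k c}

/-- Proper coloring of `KG^r(N,k;P)_{t-wide}` (vertices: `t`-wide transversal `k`-subsets). -/
def ProperPW (r N k t : ℕ) {ℓ : ℕ} (P : Fin ℓ → Finset (Fin N)) {m : ℕ}
    (c : Finset (Fin N) → Fin m) : Prop :=
  ∀ A : Fin r → Finset (Fin N), (∀ j, (A j).card = k) →
    (∀ j, Transversal P (A j)) → (∀ j, Wide N t (A j)) →
    (∀ j j', j ≠ j' → Disjoint (A j) (A j')) →
    ¬ ∀ j j', c (A j) = c (A j')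

noncomputable def chiPW (r N k t : ℕ) {ℓ : ℕ} (P : Fin ℓ → Finset (Fin N)) : ℕ :=
  sInf {m | ∃ c : Finset (Fin N) → Fin m, ProperPW r N k t P c}

/-- Proper coloring of `KG^r_s(n,k)_{t-wide}` (vertices: `t`-wide `k`-subsets). -/
def ProperSW (r n k t : ℕ) (s : Fin n → ℕ) {m : ℕ} (c : Finset (Fin n) → Fin m) : Prop :=
  ∀ A : Fin r → Finset (Fin n), (∀ j, (A j).card = k) → (∀ j, Wide n t (A j)) →
    (∀ i : Fin n, ((univ : Finset (Fin r)).filter fun j => i ∈ A j).card ≤ s i) →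
    ¬ ∀ j j', c (A j) = c (A j')

noncomputable def chiSW (r n k t : ℕ) (s : Fin n → ℕ) : ℕ :=
  sInf {m | ∃ c : Finset (Fin n) → Fin m, ProperSW r n k t s c}

/-- Extension of `s : Fin n → ℕ` to `ℕ` by zero. -/
def sE {n : ℕ} (s : Fin n → ℕ) (i : ℕ) : ℕ := if h : i < n then s ⟨i, h⟩ else 0

/-- `blockSum s j t = s_j + s_{j+1} + ⋯ + s_{j+t-1}`. -/
def blockSum {n : ℕ} (s : Fin n → ℕ) (j t : ℕ) : ℕ := ∑ i ∈ Finset.Ico j (j + t), sE s i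

/-- The partition of `[N]` into consecutive blocks of sizes `s_1, …, s_n`. -/
def blocks {n : ℕ} (s : Fin n → ℕ) (N : ℕ) (j : Fin n) : Finset (Fin N) :=
  univ.filter fun x => blockSum s 0 j.val ≤ x.val ∧ x.val < blockSum s 0 (j.val + 1)


lemma bfun_pos (r : ℕ) : 0 < bfun r := by
  unfold bfun
  rw [Finsupp.prod]
  apply Finset.prod_pos
  intro p hp
  have hpp : p.Prime := Nat.prime_of_mem_primeFactors (by rwa [Nat.support_factorization] at hp)
  have := hpp.two_le
  apply Nat.pow_pos
  split <;> omega

lemma bfun_le (r : ℕ) (hr : r ≠ 0) : bfun r ≤ r := by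
  conv_rhs => rw [← Nat.factorization_prod_pow_eq_self hr]
  unfold bfun
  rw [Finsupp.prod, Finsupp.prod]
  apply Finset.prod_le_prod (fun _ _ => Nat.zero_le _)
  intro p hp
  apply Nat.pow_le_pow_left
  split <;> omega

lemma fiber_card (b0 m i : ℕ) (hb0 : 0 < b0) (hi : i < m) :
    ((Finset.range (b0*m)).filter (fun j => j / b0 = i)).card = b0 := by
  have heq : (Finset.range (b0*m)).filter (fun j => j / b0 = i)
      = Finset.Ico (i*b0) (i*b0+b0) := by
    ext j
    simp only [Finset.mem_filter, Finset.mem_range, Finset.mem_Ico]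
    have h1 := Nat.div_add_mod j b0
    have h2 := Nat.mod_lt j hb0
    constructor
    · rintro ⟨hj, rfl⟩
      have h3 : j / b0 * b0 = b0 * (j / b0) := Nat.mul_comm _ _
      omega
    · rintro ⟨ha, hb⟩
      refine ⟨?_, Nat.div_eq_of_lt_le ha (by rw [Nat.succ_mul]; omega)⟩
      calc j < i*b0 + b0 := hb
        _ = (i+1)*b0 := by ring
        _ ≤ m * b0 := Nat.mul_le_mul_right _ hi
        _ = b0 * m := Nat.mul_comm _ _
  rw [heq, Nat.card_Ico]; omega

lemma fiber_card' (b0 m i : ℕ) (hb0 : 0 < b0) (hi : i < m) :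
    ((univ : Finset (Fin (b0*m))).filter (fun j => j.val / b0 = i)).card = b0 := by
  have key : ((univ : Finset (Fin (b0*m))).filter (fun j => j.val / b0 = i)).card
      = ((Finset.range (b0*m)).filter (fun j => j / b0 = i)).card := by
    apply Finset.card_nbij (i := Fin.val)
    · intro a ha
      simp only [Finset.mem_coe, Finset.mem_filter, Finset.mem_univ, true_and] at ha ⊢
      exact ⟨Finset.mem_range.mpr a.isLt, ha⟩
    · exact fun a _ b _ h => Fin.val_injective h
    · intro j hj
      simp only [Finset.coe_filter, Finset.mem_range, Set.mem_image, Set.mem_setOf_eq,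
        Finset.mem_univ, true_and, Finset.mem_coe] at hj ⊢
      exact ⟨⟨j, hj.1⟩, hj.2, rfl⟩
  rw [key, fiber_card b0 m i hb0 hi]

lemma exists_partition (n b0 m : ℕ) (hb0 : 1 ≤ b0) (A : Finset (Fin n))
    (hA : A.card ≤ b0 * m) (hmn : b0 * m ≤ n) :
    ∃ (l : ℕ) (P : Fin l → Finset (Fin n)), m ≤ l ∧ IsPartition P ∧
      (∀ i : Fin l, (i.val < m → (P i).card = b0) ∧ (P i).card ≤ b0) ∧
      A ⊆ (univ.filter fun i : Fin l => i.val < m).biUnion P := by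
  obtain ⟨A', hAA', hA'card⟩ := Finset.exists_superset_card_eq hA (by simpa using hmn)
  set l := m + (n - b0 * m) with hl
  have hcompl : (A'ᶜ : Finset (Fin n)).card = n - b0 * m := by
    rw [Finset.card_compl, hA'card, Fintype.card_fin]
  set e1 : {x // x ∈ A'} ≃ Fin (b0 * m) := A'.equivFin.trans (finCongr hA'card) with he1
  set e2 := (A'ᶜ : Finset (Fin n)).equivFin with he2
  set idx : Fin n → Fin l := fun x =>
    if h : x ∈ A' then
      ⟨(e1 ⟨x, h⟩).val / b0, by
        have : (e1 ⟨x, h⟩).val / b0 < m := Nat.div_lt_of_lt_mul (e1 ⟨x, h⟩).isLt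
        omega⟩
    else
      ⟨m + (e2 ⟨x, by simpa using h⟩).val, by
        have h2 := (e2 ⟨x, by simpa using h⟩).isLt
        omega⟩ with hidx
  have hidx_lt : ∀ x (h : x ∈ A'), (idx x).val < m := by
    intro x h
    simp only [hidx, dif_pos h]
    exact Nat.div_lt_of_lt_mul (e1 ⟨x, h⟩).isLt
  have hidx_ge : ∀ x, x ∉ A' → m ≤ (idx x).val := by
    intro x h
    simp only [hidx, dif_neg h]
    omega
  refine ⟨l, fun i => univ.filter (fun x => idx x = i), by omega, ⟨?_, ?_⟩, ?_, ?_⟩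
  · intro i j hij
    simp only [Finset.disjoint_filter]
    rintro x _ rfl h; exact hij h
  · intro x; exact ⟨idx x, by simp⟩
  · intro i
    have hcase : i.val < m → (univ.filter (fun x => idx x = i)).card = b0 := by
      intro him
      have hset : univ.filter (fun x => idx x = i)
          = (((univ : Finset (Fin (b0*m))).filter (fun j => j.val / b0 = i.val)).image
              (fun j => (e1.symm j : Fin n))) := by
        ext x
        simp only [Finset.mem_filter, Finset.mem_univ, true_and, Finset.mem_image]
        constructor
        · intro hx
          have hxA' : x ∈ A' := by
            by_contra h
            have := hidx_ge x h
            rw [hx] at this; omega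
          refine ⟨e1 ⟨x, hxA'⟩, ?_, by simp⟩
          have : (idx x).val = (e1 ⟨x, hxA'⟩).val / b0 := by
            simp only [hidx, dif_pos hxA']
          rw [hx] at this; omega
        · rintro ⟨j, hj, rfl⟩
          have hxA' : ((e1.symm j : {x // x ∈ A'}) : Fin n) ∈ A' := (e1.symm j).2
          apply Fin.ext
          have heq : (⟨(e1.symm j : Fin n), hxA'⟩ : {x // x ∈ A'}) = e1.symm j := rfl
          simp only [hidx, dif_pos hxA', heq, Equiv.apply_symm_apply]
          omega
      rw [hset, Finset.card_image_of_injective _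
        (fun a b hab => e1.symm.injective (Subtype.val_injective hab)),
        fiber_card' b0 m i.val (by omega) him]
    refine ⟨hcase, ?_⟩
    rcases Nat.lt_or_ge i.val m with h | h
    · rw [hcase h]
    · have : (univ.filter (fun x => idx x = i)).card ≤ 1 := by
        apply Finset.card_le_one.mpr
        intro x hx y hy
        simp only [Finset.mem_filter, Finset.mem_univ, true_and] at hx hy
        have hxA : x ∉ A' := fun hc => by have := hidx_lt x hc; rw [hx] at this; omega
        have hyA : y ∉ A' := fun hc => by have := hidx_lt y hc; rw [hy] at this; omega
        have hv : (idx x).val = (idx y).val := by rw [hx, hy]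
        simp only [hidx, dif_neg hxA, dif_neg hyA] at hv
        have : (e2 ⟨x, by simpa using hxA⟩) = (e2 ⟨y, by simpa using hyA⟩) :=
          Fin.ext (by omega)
        have := e2.injective this
        exact congrArg Subtype.val this
      exact this.trans hb0
  · intro x hx
    simp only [Finset.mem_biUnion, Finset.mem_filter, Finset.mem_univ, true_and]
    exact ⟨idx x, hidx_lt x (hAA' hx), by simp⟩

/-- for `|A| ≤ b(r)(k-1)` there is a suitable partition whose first `k-1` parts
cover `A`; for any such partition transversal `k`-sets avoid `A`, and
`χ(KG^r_A(n,k)) ≥ ⌈(n - r(k-1))/(r-1)⌉`. -/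
theorem stmt8 (r n k : ℕ) (A : Finset (Fin n)) (hr : 2 ≤ r) (hk : 1 ≤ k)
    (hn : 2 * r * k ≤ n) (hA : A.card ≤ bfun r * (k - 1))
    (Hparts : ∀ (M K l : ℕ) (Q : Fin l → Finset (Fin M)), 1 ≤ K → r * K ≤ M →
      IsPartition Q → (∀ i, (Q i).card ≤ bfun r) →
      chiP r M K Q = cld (M - r * (K - 1)) (r - 1)) :
    (∃ (l : ℕ) (P : Fin l → Finset (Fin n)), k - 1 ≤ l ∧ IsPartition P ∧
      (∀ i : Fin l, (i.val < k - 1 → (P i).card = bfun r) ∧ (P i).card ≤ bfun r) ∧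
      A ⊆ (univ.filter fun i : Fin l => i.val < k - 1).biUnion P) ∧
    (∀ (l : ℕ) (P : Fin l → Finset (Fin n)), k - 1 ≤ l → IsPartition P →
      (∀ i : Fin l, (i.val < k - 1 → (P i).card = bfun r) ∧ (P i).card ≤ bfun r) →
      A ⊆ (univ.filter fun i : Fin l => i.val < k - 1).biUnion P →
      ∀ σ : Finset (Fin n), σ.card = k → Transversal P σ → ¬ σ ⊆ A) ∧
    cld (n - r * (k - 1)) (r - 1) ≤ chiA r n k A := by
  have hb0 : 1 ≤ bfun r := bfun_pos r
  have hble : bfun r ≤ r := bfun_le r (by omega)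
  have hmn : bfun r * (k - 1) ≤ n := by
    calc bfun r * (k - 1) ≤ r * k := Nat.mul_le_mul hble (by omega)
      _ ≤ n := by nlinarith
  obtain ⟨l, P, hml, hPart, hcards, hAsub⟩ :=
    exists_partition n (bfun r) (k - 1) hb0 A hA hmn
  have part2 : ∀ (l : ℕ) (P : Fin l → Finset (Fin n)), k - 1 ≤ l → IsPartition P →
      (∀ i : Fin l, (i.val < k - 1 → (P i).card = bfun r) ∧ (P i).card ≤ bfun r) →
      A ⊆ (univ.filter fun i : Fin l => i.val < k - 1).biUnion P →
      ∀ σ : Finset (Fin n), σ.card = k → Transversal P σ → ¬ σ ⊆ A := by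
    intro l P hml hPart hcards hAsub σ hσcard hTrans hσA
    set S : Finset (Fin l) := univ.filter fun i : Fin l => i.val < k - 1 with hS
    have hσsub : σ ⊆ S.biUnion (fun i => σ ∩ P i) := by
      intro x hx
      have hxA : x ∈ S.biUnion P := hAsub (hσA hx)
      rw [Finset.mem_biUnion] at hxA ⊢
      obtain ⟨i, hi, hxi⟩ := hxA
      exact ⟨i, hi, Finset.mem_inter.mpr ⟨hx, hxi⟩⟩
    have hcard1 : σ.card ≤ ∑ i ∈ S, (σ ∩ P i).card :=
      le_trans (Finset.card_le_card hσsub) (Finset.card_biUnion_le)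
    have hcard2 : ∑ i ∈ S, (σ ∩ P i).card ≤ S.card * 1 :=
      Finset.sum_le_card_nsmul S _ 1 (fun i _ => hTrans i)
    have hScard : S.card ≤ k - 1 := by
      have heq : S.card = ((Finset.range (k-1)).filter fun j => j < l).card := by
        apply Finset.card_nbij (i := Fin.val)
        · intro a ha
          simp only [hS, Finset.mem_coe, Finset.mem_filter, Finset.mem_univ, true_and,
            Finset.mem_range] at ha ⊢
          exact ⟨ha, a.isLt⟩
        · exact fun a _ b _ h => Fin.val_injective h
        · intro j hj
          simp only [hS, Finset.coe_filter, Finset.mem_range, Set.mem_image,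
            Set.mem_setOf_eq, Finset.mem_univ, true_and, Finset.mem_coe] at hj ⊢
          exact ⟨⟨j, hj.2⟩, hj.1, rfl⟩
      rw [heq]
      exact le_trans (Finset.card_filter_le _ _) (by simp)
    omega
  refine ⟨⟨l, P, hml, hPart, hcards, hAsub⟩, part2, ?_⟩
  have hrk : r * k ≤ n := by nlinarith
  have hchiP : chiP r n k P = cld (n - r * (k - 1)) (r - 1) :=
    Hparts n k l P hk hrk hPart (fun i => (hcards i).2)
  rw [← hchiP]
  unfold chiP chiA
  apply csInf_le_csInf (OrderBot.bddBelow _)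
  · refine ⟨Fintype.card (Finset (Fin n)), Fintype.equivFin (Finset (Fin n)), ?_⟩
    intro B hBcard hBA hBdisj hmono
    have h01 : (⟨0, by omega⟩ : Fin r) ≠ ⟨1, by omega⟩ := by
      simp [Fin.ext_iff]
    have hdisj := hBdisj _ _ h01
    have hne : B ⟨0, by omega⟩ ≠ B ⟨1, by omega⟩ := by
      intro h
      rw [h] at hdisj
      have h2 := disjoint_self.mp hdisj
      have h3 := hBcard ⟨1, by omega⟩
      rw [h2] at h3
      simp at h3
      omega
    exact hne ((Fintype.equivFin (Finset (Fin n))).injective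
      (hmono ⟨0, by omega⟩ ⟨1, by omega⟩))
  · rintro x ⟨c, hc⟩
    refine ⟨c, ?_⟩
    intro B hBcard hBtrans hBdisj
    apply hc B hBcard ?_ hBdisj
    intro j
    exact part2 l P hml hPart hcards hAsub (B j) (hBcard j) (hBtrans j)
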